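/- arXiv:math/0010156 — 3 statements merged into one kernel-verified Lean document; each statement's English description precedes it below -/
import Mathlib

section
/- Let X be a Banach space with a Schauder decomposition (E_n) and associated projections P_n. Suppose each E_n has a finite Schauder decomposition (F_{n,k})_{k=1}^{m_n} with decomposition constants uniformly bounded by some M. Then the interleaved sequence (F_{1,1}, ..., F_{1,m_1}, F_{2,1}, ..., F_{2,m_2}, ...) is a Schauder decomposition of X. -/
open Filter Finset

/-- If `(Eₙ, Pₙ)` is a Schauder decomposition of `X` and each `Eₙ` has a
finite Schauder decomposition `(F_{n,k})_{k<mₙ}` (with projections `Q n k`) whose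
decomposition constants are uniformly bounded by `M`, then the interleaved sequence of all
the `F_{n,k}`'s is again a Schauder decomposition of `X`: its partial-sum projections are
uniformly bounded and converge pointwise to the identity. -/
theorem interleaved_schauder_decomposition {X : Type*} [NormedAddCommGroup X]
    [NormedSpace ℝ X] [CompleteSpace X]
    (P : ℕ → X →L[ℝ] X) (m : ℕ → ℕ) (Q : ℕ → ℕ → X →L[ℝ] X) (D M : ℝ)
    (hm : ∀ n, 1 ≤ m n)
    -- `(Pₙ)` is a Schauder decomposition of `X`:
    (hidem : ∀ n x, P n (P n x) = P n x)
    (horth : ∀ j k, j ≠ k → ∀ x, P j (P k x) = 0)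
    (hconv : ∀ x : X, Tendsto (fun N => ∑ k ∈ Finset.range N, P k x) atTop (nhds x))
    (hD : ∀ N, ‖∑ k ∈ Finset.range N, P k‖ ≤ D)
    -- `(Q n k)_{k < m n}` is a finite Schauder decomposition of `Eₙ = ran Pₙ`:
    (hQdec : ∀ n, ∑ k ∈ Finset.range (m n), Q n k = P n)
    (hQsub : ∀ n k, k < m n → ∀ x, Q n k (P n x) = Q n k x ∧ P n (Q n k x) = Q n k x)
    (hQidem : ∀ n k, k < m n → ∀ x, Q n k (Q n k x) = Q n k x)
    (hQorth : ∀ n k l, k ≠ l → ∀ x, Q n k (Q n l x) = 0)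
    -- uniform bound `M` on the finite decomposition constants:
    (hM : ∀ n j, j ≤ m n → ‖(∑ k ∈ Finset.range j, Q n k).comp (P n)‖ ≤ M) :
    -- Conclusion: the interleaved partial sums are uniformly bounded and
    -- converge to the identity, i.e. the interleaved family is a Schauder decomposition.
    ∃ M' : ℝ, (∀ n j, j ≤ m n →
        ‖(∑ i ∈ Finset.range n, P i) + ∑ k ∈ Finset.range j, Q n k‖ ≤ M') ∧
      ∀ (x : X) (j : ℕ → ℕ), (∀ n, j n ≤ m n) →
        Tendsto (fun n => (∑ i ∈ Finset.range n, P i) x + ∑ k ∈ Finset.range (j n), Q n k x)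
          atTop (nhds x) := by
  have hTnorm : ∀ n j, j ≤ m n → ‖∑ k ∈ Finset.range j, Q n k‖ ≤ M := by
    intro n j hj
    have hT : (∑ k ∈ Finset.range j, Q n k) = (∑ k ∈ Finset.range j, Q n k).comp (P n) := by
      ext x
      simp only [ContinuousLinearMap.coe_comp', Function.comp_apply,
        ContinuousLinearMap.coe_sum', Finset.sum_apply]
      exact Finset.sum_congr rfl fun k hk =>
        ((hQsub n k (lt_of_lt_of_le (Finset.mem_range.mp hk) hj) x).1).symm
    rw [hT]; exact hM n j hj
  refine ⟨D + M, ?_, ?_⟩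
  · intro n j hj
    calc ‖(∑ i ∈ Finset.range n, P i) + ∑ k ∈ Finset.range j, Q n k‖
        ≤ ‖∑ i ∈ Finset.range n, P i‖ + ‖∑ k ∈ Finset.range j, Q n k‖ := norm_add_le _ _
      _ ≤ D + M := add_le_add (hD n) (hTnorm n j hj)
  · intro x j hj
    have hP0 : Tendsto (fun n => P n x) atTop (nhds 0) := by
      have h2 : (fun n => P n x) =
          fun n => (∑ k ∈ Finset.range (n + 1), P k x) - ∑ k ∈ Finset.range n, P k x := by
        funext n; rw [Finset.sum_range_succ]; abel
      rw [h2]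
      have := ((hconv x).comp (tendsto_add_atTop_nat 1)).sub (hconv x)
      simpa using this
    have hT0 : Tendsto (fun n => ∑ k ∈ Finset.range (j n), Q n k x) atTop (nhds 0) := by
      rw [tendsto_zero_iff_norm_tendsto_zero]
      have hb : ∀ n, ‖∑ k ∈ Finset.range (j n), Q n k x‖ ≤ M * ‖P n x‖ := by
        intro n
        have he : ∑ k ∈ Finset.range (j n), Q n k x
            = (∑ k ∈ Finset.range (j n), Q n k) (P n x) := by
          simp only [ContinuousLinearMap.coe_sum', Finset.sum_apply]
          exact Finset.sum_congr rfl fun k hk =>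
            ((hQsub n k (lt_of_lt_of_le (Finset.mem_range.mp hk) (hj n)) x).1).symm
        rw [he]
        calc ‖(∑ k ∈ Finset.range (j n), Q n k) (P n x)‖
            ≤ ‖∑ k ∈ Finset.range (j n), Q n k‖ * ‖P n x‖ :=
              ContinuousLinearMap.le_opNorm _ _
          _ ≤ M * ‖P n x‖ := by
              exact mul_le_mul_of_nonneg_right (hTnorm n (j n) (hj n)) (norm_nonneg _)
      have hlim : Tendsto (fun n => M * ‖P n x‖) atTop (nhds 0) := by
        simpa using hP0.norm.const_mul M
      exact squeeze_zero (fun n => norm_nonneg _) hb hlim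
    simpa using (hconv x).add hT0
end

section
/- Let X be a Banach space with a Schauder decomposition (E_n) with projections P_n satisfying C₁ = sup_n ‖P_n‖ < ∞. Suppose there is a constant C such that for every finitely nonzero sequence (x_k) with x_k ∈ E_k, ‖Σ x_k‖ ≤ C (Σ ‖x_k‖²)^{1/2}, and the same upper ℓ₂-estimate holds (with the same C) for the dual decomposition Z_n = P_n*(X*) in X*: for finitely nonzero x_k* ∈ Z_k, ‖Σ x_k*‖ ≤ C (Σ ‖x_k*‖²)^{1/2}. Then the decomposition also satisfies the lower ℓ₂-estimate (Σ ‖x_k‖²)^{1/2} ≤ C·C·C₁ ‖Σ x_k‖ for all finitely nonzero sequences x_k ∈ E_k; hence X is isomorphic to the ℓ₂-sum (Σ ⊕ E_n)_{ℓ₂}. -/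
set_option maxHeartbeats 1000000
set_option synthInstance.maxHeartbeats 400000



open Filter Finset
open scoped ENNReal

/-- Let `(Eₙ, Pₙ)` be a Schauder decomposition of a Banach space `X` with
`C₁ = sup ‖Pₙ‖ < ∞`, satisfying an upper ℓ₂-estimate with constant `C`, and whose dual
decomposition `Zₙ = Pₙ*(X*)` satisfies the same upper ℓ₂-estimate with constant `C`.
Then the decomposition satisfies the lower ℓ₂-estimate with constant `C·C·C₁`, and hence
`X` is isomorphic to the ℓ₂-sum `(Σ ⊕ Eₙ)_{ℓ₂}`. -/
theorem lower_ell2_estimate_of_upper_estimates {X : Type*} [NormedAddCommGroup X]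
    [NormedSpace ℝ X] [CompleteSpace X]
    (P : ℕ → X →L[ℝ] X) (C C₁ : ℝ) (hC : 0 < C) (hC₁ : 0 < C₁)
    (hidem : ∀ n x, P n (P n x) = P n x)
    (horth : ∀ j k, j ≠ k → ∀ x, P j (P k x) = 0)
    (hconv : ∀ x : X, Tendsto (fun N => ∑ k ∈ Finset.range N, P k x) atTop (nhds x))
    (hC₁bound : ∀ n, ‖P n‖ ≤ C₁)
    -- upper ℓ₂-estimate for finitely nonzero sequences `xₖ ∈ Eₖ`:
    (hupper : ∀ (N : ℕ) (x : ℕ → X), (∀ k, P k (x k) = x k) →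
      ‖∑ k ∈ Finset.range N, x k‖ ≤ C * Real.sqrt (∑ k ∈ Finset.range N, ‖x k‖ ^ 2))
    -- upper ℓ₂-estimate for the dual decomposition `Zₖ = Pₖ*(X*)`:
    (hdual : ∀ (N : ℕ) (φ : ℕ → X →L[ℝ] ℝ), (∀ k, ∃ ψ : X →L[ℝ] ℝ, φ k = ψ.comp (P k)) →
      ‖∑ k ∈ Finset.range N, φ k‖ ≤ C * Real.sqrt (∑ k ∈ Finset.range N, ‖φ k‖ ^ 2)) :
    (∀ (N : ℕ) (x : ℕ → X), (∀ k, P k (x k) = x k) →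
      Real.sqrt (∑ k ∈ Finset.range N, ‖x k‖ ^ 2) ≤ C * C * C₁ * ‖∑ k ∈ Finset.range N, x k‖)
    ∧ Nonempty (X ≃L[ℝ] lp (fun n => LinearMap.range (P n : X →ₗ[ℝ] X)) 2) := by
  have hlow : ∀ (N : ℕ) (x : ℕ → X), (∀ k, P k (x k) = x k) →
      Real.sqrt (∑ k ∈ Finset.range N, ‖x k‖ ^ 2) ≤ C * C * C₁ * ‖∑ k ∈ Finset.range N, x k‖ := by
    classical
    intro N x hx
    set S := ∑ k ∈ Finset.range N, ‖x k‖ ^ 2 with hSdef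
    have hS0 : 0 ≤ S := Finset.sum_nonneg fun _ _ => sq_nonneg _
    rcases eq_or_lt_of_le hS0 with h0 | hpos
    · rw [← h0, Real.sqrt_zero]; positivity
    · have hex : ∃ k ∈ Finset.range N, x k ≠ 0 := by
        by_contra h
        push_neg at h
        have : S = 0 := Finset.sum_eq_zero fun k hk => by rw [h k hk, norm_zero]; ring
        linarith
      obtain ⟨k0, hk0N, hk0⟩ := hex
      -- C ≥ 1
      have hCge1 : 1 ≤ C := by
        have h1 := hupper (k0 + 1) (fun j => if j = k0 then x k0 else 0) (by
          intro k
          by_cases h : k = k0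
          · subst h; simp [hx k]
          · simp [h])
        have hs1 : ∑ j ∈ Finset.range (k0+1), (if j = k0 then x k0 else 0) = x k0 := by
          rw [Finset.sum_ite_eq' (Finset.range (k0+1)) k0 (fun _ => x k0)]
          simp
        have hs2 : ∑ j ∈ Finset.range (k0+1), ‖if j = k0 then x k0 else 0‖ ^ 2 = ‖x k0‖ ^ 2 := by
          rw [Finset.sum_eq_single k0 (fun j _ hj => by simp [hj])
            (fun h => absurd (Finset.self_mem_range_succ k0) h)]
          simp
        rw [hs1, hs2, Real.sqrt_sq (norm_nonneg _)] at h1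
        have hxpos : 0 < ‖x k0‖ := norm_pos_iff.2 hk0
        nlinarith
      -- dual functionals
      have hg : ∀ k, ∃ φ : X →L[ℝ] ℝ, (∃ ψ : X →L[ℝ] ℝ, φ = ψ.comp (P k)) ∧
          ‖φ‖ ≤ C₁ * ‖x k‖ ∧ (∀ j, j ≠ k → φ (x j) = 0) ∧ φ (x k) = ‖x k‖ ^ 2 := by
        intro k
        by_cases h : x k = 0
        · exact ⟨0, ⟨0, by simp⟩, by simp [h], fun j _ => rfl, by simp [h]⟩
        · obtain ⟨g, hg1, hg2⟩ := exists_dual_vector ℝ (x k) (norm_ne_zero_iff.2 h)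
          refine ⟨‖x k‖ • (g.comp (P k)), ⟨‖x k‖ • g, by rw [ContinuousLinearMap.smul_comp]⟩, ?_, ?_, ?_⟩
          · refine ContinuousLinearMap.opNorm_le_bound _ (by positivity) fun y => ?_
            have h1 : (‖x k‖ • (g.comp (P k))) y = ‖x k‖ * g (P k y) := rfl
            rw [h1, Real.norm_eq_abs, abs_mul, abs_of_nonneg (norm_nonneg _)]
            have h2 : |g (P k y)| ≤ ‖P k y‖ := by
              have := g.le_opNorm (P k y)
              rw [hg1, one_mul] at this
              simpa [Real.norm_eq_abs] using this
            have h3 : ‖P k y‖ ≤ C₁ * ‖y‖ :=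
              ((P k).le_opNorm y).trans
                (mul_le_mul_of_nonneg_right (hC₁bound k) (norm_nonneg y))
            nlinarith [norm_nonneg (x k), abs_nonneg (g (P k y)), norm_nonneg (P k y)]
          · intro j hj
            have : P k (x j) = 0 := by rw [← hx j, horth k j (Ne.symm hj)]
            simp [this]
          · have : P k (x k) = x k := hx k
            simp [this, hg2]; ring
      choose φ hφmem hφnorm hφorth hφdiag using hg
      have hpair : (∑ k ∈ Finset.range N, φ k) (∑ j ∈ Finset.range N, x j) = S := by
        rw [ContinuousLinearMap.sum_apply]
        rw [hSdef]
        refine Finset.sum_congr rfl fun k hk => ?_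
        rw [map_sum]
        rw [Finset.sum_eq_single k (fun j _ hj => hφorth k j hj) (fun h => absurd hk h)]
        exact hφdiag k
      have hφsum : ∑ k ∈ Finset.range N, ‖φ k‖ ^ 2 ≤ C₁ ^ 2 * S := by
        rw [hSdef, Finset.mul_sum]
        refine Finset.sum_le_sum fun k _ => ?_
        have h1 := hφnorm k
        have := norm_nonneg (φ k)
        nlinarith [norm_nonneg (x k)]
      have hdb : ‖∑ k ∈ Finset.range N, φ k‖ ≤ C * C₁ * Real.sqrt S := by
        calc ‖∑ k ∈ Finset.range N, φ k‖ ≤ C * Real.sqrt (∑ k ∈ Finset.range N, ‖φ k‖ ^ 2) :=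
              hdual N φ hφmem
        _ ≤ C * Real.sqrt (C₁ ^ 2 * S) := by
              exact mul_le_mul_of_nonneg_left (Real.sqrt_le_sqrt hφsum) hC.le
        _ = C * C₁ * Real.sqrt S := by
              rw [Real.sqrt_mul (sq_nonneg _), Real.sqrt_sq hC₁.le]; ring
      have hSle : S ≤ C * C₁ * Real.sqrt S * ‖∑ j ∈ Finset.range N, x j‖ := by
        calc S = (∑ k ∈ Finset.range N, φ k) (∑ j ∈ Finset.range N, x j) := hpair.symm
        _ ≤ ‖(∑ k ∈ Finset.range N, φ k) (∑ j ∈ Finset.range N, x j)‖ := le_abs_self _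
        _ ≤ ‖∑ k ∈ Finset.range N, φ k‖ * ‖∑ j ∈ Finset.range N, x j‖ :=
              ContinuousLinearMap.le_opNorm _ _
        _ ≤ C * C₁ * Real.sqrt S * ‖∑ j ∈ Finset.range N, x j‖ :=
              mul_le_mul_of_nonneg_right hdb (norm_nonneg _)
      have hsqrtpos : 0 < Real.sqrt S := Real.sqrt_pos.2 hpos
      have hS_eq : S = Real.sqrt S * Real.sqrt S := (Real.mul_self_sqrt hS0).symm
      have key : Real.sqrt S ≤ C * C₁ * ‖∑ j ∈ Finset.range N, x j‖ := by
        nlinarith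
      calc Real.sqrt S ≤ C * C₁ * ‖∑ j ∈ Finset.range N, x j‖ := key
      _ ≤ C * C * C₁ * ‖∑ j ∈ Finset.range N, x j‖ := by nlinarith [norm_nonneg (∑ j ∈ Finset.range N, x j)]
  refine ⟨hlow, ?_⟩
  classical
  haveI : Fact ((1 : ℝ≥0∞) ≤ 2) := ⟨one_le_two⟩
  -- membership criterion
  have hmem : ∀ n (y : X), y ∈ LinearMap.range (P n : X →ₗ[ℝ] X) ↔ P n y = y := by
    intro n y
    constructor
    · rintro ⟨z, rfl⟩; exact hidem n z
    · intro h; exact ⟨y, h⟩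
  -- ranges are closed, hence complete
  haveI hcompl : ∀ n, CompleteSpace (LinearMap.range (P n : X →ₗ[ℝ] X)) := by
    intro n
    have hclosed : IsClosed ((LinearMap.range (P n : X →ₗ[ℝ] X) : Submodule ℝ X) : Set X) := by
      have : ((LinearMap.range (P n : X →ₗ[ℝ] X) : Submodule ℝ X) : Set X)
          = {y | P n y - y = 0} := by
        ext y; simp only [SetLike.mem_coe, hmem n y, Set.mem_setOf_eq, sub_eq_zero]
      rw [this]
      exact isClosed_eq ((P n).continuous.sub continuous_id) continuous_const
    exact hclosed.completeSpace_coe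
  have hK : 0 < C * C * C₁ := by positivity
  -- uniform bound for partial sum projections
  have hQapp : ∀ (N : ℕ) (x : X),
      (∑ k ∈ Finset.range N, P k) x = ∑ k ∈ Finset.range N, P k x := by
    intro N x; simp [ContinuousLinearMap.sum_apply]
  obtain ⟨M₀, hM₀⟩ : ∃ M₀, ∀ N, ‖∑ k ∈ Finset.range N, P k‖ ≤ M₀ := by
    apply banach_steinhaus
    intro x
    have hb : BddAbove (Set.range fun N => ‖(∑ k ∈ Finset.range N, P k) x‖) := by
      have ht : Tendsto (fun N => ‖(∑ k ∈ Finset.range N, P k) x‖) atTop (nhds ‖x‖) := by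
        refine (hconv x).norm.congr fun N => ?_
        rw [hQapp]
      exact ht.bddAbove_range
    obtain ⟨c, hc⟩ := hb
    exact ⟨c, fun N => hc ⟨N, rfl⟩⟩
  have hM1 : 1 ≤ max M₀ 1 := le_max_right _ _
  have hM0 : 0 < max M₀ 1 := lt_of_lt_of_le one_pos hM1
  have hQ : ∀ (N : ℕ) (x : X), ‖∑ k ∈ Finset.range N, P k x‖ ≤ max M₀ 1 * ‖x‖ := by
    intro N x
    rw [← hQapp]
    exact ((∑ k ∈ Finset.range N, P k).le_opNorm x).trans
      (mul_le_mul_of_nonneg_right ((hM₀ N).trans (le_max_left _ _)) (norm_nonneg x))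
  -- key bound
  have hsumbound : ∀ (x : X) (N : ℕ),
      ∑ k ∈ Finset.range N, ‖P k x‖ ^ 2 ≤ (C * C * C₁ * max M₀ 1 * ‖x‖) ^ 2 := by
    intro x N
    have h1 := hlow N (fun k => P k x) (fun k => hidem k x)
    have h3 : Real.sqrt (∑ k ∈ Finset.range N, ‖P k x‖ ^ 2) ≤ C * C * C₁ * max M₀ 1 * ‖x‖ := by
      calc Real.sqrt (∑ k ∈ Finset.range N, ‖P k x‖ ^ 2)
          ≤ C * C * C₁ * ‖∑ k ∈ Finset.range N, P k x‖ := h1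
        _ ≤ C * C * C₁ * (max M₀ 1 * ‖x‖) := mul_le_mul_of_nonneg_left (hQ N x) hK.le
        _ = C * C * C₁ * max M₀ 1 * ‖x‖ := by ring
    have h4 : 0 ≤ ∑ k ∈ Finset.range N, ‖P k x‖ ^ 2 :=
      Finset.sum_nonneg fun _ _ => sq_nonneg _
    calc ∑ k ∈ Finset.range N, ‖P k x‖ ^ 2
        = Real.sqrt (∑ k ∈ Finset.range N, ‖P k x‖ ^ 2) ^ 2 := (Real.sq_sqrt h4).symm
      _ ≤ (C * C * C₁ * max M₀ 1 * ‖x‖) ^ 2 := by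
          have := Real.sqrt_nonneg (∑ k ∈ Finset.range N, ‖P k x‖ ^ 2)
          nlinarith
  -- membership in ℓ²
  have hmemlp : ∀ x : X,
      Memℓp (fun n => (⟨P n x, ⟨x, rfl⟩⟩ : LinearMap.range (P n : X →ₗ[ℝ] X))) 2 := by
    intro x
    apply memℓp_gen
    have heq : (fun n => ‖(⟨P n x, ⟨x, rfl⟩⟩ :
        LinearMap.range (P n : X →ₗ[ℝ] X))‖ ^ ((2:ℝ≥0∞)).toReal)
        = fun n => ‖P n x‖ ^ (2:ℕ) := by
      funext n
      rw [show ((2:ℝ≥0∞)).toReal = (2:ℝ) by simp, Real.rpow_two]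
      rfl
    rw [heq]
    exact summable_of_sum_range_le (fun n => sq_nonneg _) (fun N => hsumbound x N)
  -- the linear map T
  have hT : ∃ T : X →ₗ[ℝ] lp (fun n => LinearMap.range (P n : X →ₗ[ℝ] X)) 2,
      ∀ (x : X) (n : ℕ), ((T x) n : X) = P n x := by
    refine ⟨{ toFun := fun x => ⟨fun n => ⟨P n x, ⟨x, rfl⟩⟩, hmemlp x⟩
              map_add' := ?_
              map_smul' := ?_ }, fun x n => rfl⟩
    · intro x y
      apply lp.ext
      funext n
      apply Subtype.ext
      show P n (x + y) = P n x + P n y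
      exact map_add _ _ _
    · intro c x
      apply lp.ext
      funext n
      apply Subtype.ext
      show P n (c • x) = c • P n x
      exact map_smul _ _ _
  obtain ⟨T, hTapp⟩ := hT
  have hTnorm : ∀ x, ‖T x‖ ≤ C * C * C₁ * max M₀ 1 * ‖x‖ := by
    intro x
    have hp : 0 < ((2:ℝ≥0∞)).toReal := by simp
    have hnorm := lp.norm_rpow_eq_tsum hp (T x)
    have htsum : ∑' n, ‖P n x‖ ^ (2:ℕ) ≤ (C * C * C₁ * max M₀ 1 * ‖x‖) ^ 2 :=
      Summable.tsum_le_of_sum_range_le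
        (summable_of_sum_range_le (fun n => sq_nonneg _) (fun N => hsumbound x N))
        (fun N => hsumbound x N)
    have heq : ‖T x‖ ^ (2:ℕ) = ∑' n, ‖P n x‖ ^ (2:ℕ) := by
      rw [show ((2:ℝ≥0∞)).toReal = (2:ℝ) by simp] at hnorm
      rw [← Real.rpow_two, hnorm]
      congr 1
      funext n
      rw [Real.rpow_two]
      exact congrArg (fun t : X => ‖t‖ ^ 2) (hTapp x n)
    have h0 : 0 ≤ ‖T x‖ := norm_nonneg _
    have h1 : ‖T x‖ ^ 2 ≤ (C * C * C₁ * max M₀ 1 * ‖x‖) ^ 2 := by rw [heq]; exact htsum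
    have h2 : 0 ≤ C * C * C₁ * max M₀ 1 * ‖x‖ := by positivity
    nlinarith
  set Tc : X →L[ℝ] lp (fun n => LinearMap.range (P n : X →ₗ[ℝ] X)) 2 :=
    T.mkContinuous (C * C * C₁ * max M₀ 1) hTnorm with hTcdef
  have hTcapp : ∀ (x : X) (n : ℕ), ((Tc x) n : X) = P n x := hTapp
  -- injectivity
  have hinj : LinearMap.ker (Tc : X →ₗ[ℝ] lp (fun n => LinearMap.range (P n : X →ₗ[ℝ] X)) 2) = ⊥ := by
    rw [LinearMap.ker_eq_bot']
    intro x hx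
    have hPn : ∀ n, P n x = 0 := by
      intro n
      have h1 : ((Tc x) n : X) = 0 := by rw [show Tc x = 0 from hx]; rfl
      rw [← hTcapp x n, h1]
    have h0 : Tendsto (fun N : ℕ => (0 : X)) atTop (nhds x) := by
      refine (hconv x).congr fun N => ?_
      exact Finset.sum_eq_zero fun k _ => hPn k
    exact tendsto_nhds_unique h0 tendsto_const_nhds
  -- surjectivity
  have hsurj : LinearMap.range (Tc : X →ₗ[ℝ] lp (fun n => LinearMap.range (P n : X →ₗ[ℝ] X)) 2) = ⊤ := by
    rw [LinearMap.range_eq_top]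
    intro f
    have hsq : Summable fun n => ‖f n‖ ^ (2:ℕ) := by
      have hp : 0 < ((2:ℝ≥0∞)).toReal := by simp
      refine ((lp.memℓp f).summable hp).congr fun n => ?_
      rw [show ((2:ℝ≥0∞)).toReal = (2:ℝ) by simp, Real.rpow_two]
    have hfk : ∀ k, P k (f k : X) = (f k : X) := fun k => (hmem k _).1 (f k).2
    -- Cauchy sequence of partial sums
    have hcauchy : CauchySeq (fun N => ∑ k ∈ Finset.range N, (f k : X)) := by
      apply cauchySeq_of_le_tendsto_0
        (fun N => C * Real.sqrt (∑' j, ‖f (j + N)‖ ^ (2:ℕ)))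
      · intro n m N hn hm
        wlog hmn : m ≤ n generalizing m n
        · rw [dist_comm]; exact this m n hm hn (le_of_not_ge hmn)
        rw [dist_eq_norm, ← Finset.sum_Ico_eq_sub (fun k => ((f k : X))) hmn]
        have htail : Summable fun j => ‖f (j + N)‖ ^ (2:ℕ) :=
          (summable_nat_add_iff N).2 hsq
        have hIco : ∑ k ∈ Finset.Ico m n, ‖(f k : X)‖ ^ 2 ≤ ∑' j, ‖f (j + N)‖ ^ (2:ℕ) := by
          calc ∑ k ∈ Finset.Ico m n, ‖(f k : X)‖ ^ 2
              ≤ ∑ k ∈ Finset.Ico N n, ‖(f k : X)‖ ^ 2 := by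
                refine Finset.sum_le_sum_of_subset_of_nonneg
                  (Finset.Ico_subset_Ico hm le_rfl) (fun k _ _ => sq_nonneg _)
            _ = ∑ j ∈ Finset.range (n - N), ‖f (N + j)‖ ^ 2 :=
                Finset.sum_Ico_eq_sum_range _ _ _
            _ = ∑ j ∈ Finset.range (n - N), ‖f (j + N)‖ ^ 2 := by
                refine Finset.sum_congr rfl fun j _ => by rw [add_comm]
            _ ≤ ∑' j, ‖f (j + N)‖ ^ (2:ℕ) :=
                Summable.sum_le_tsum _ (fun j _ => sq_nonneg _) htail
        -- upper estimate with zero padding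
        have hpad := hupper n (fun k => if m ≤ k then (f k : X) else 0) (by
          intro k
          by_cases h : m ≤ k
          · simp [h, hfk k]
          · simp [h])
        have hs1 : ∑ k ∈ Finset.range n, (if m ≤ k then (f k : X) else 0)
            = ∑ k ∈ Finset.Ico m n, (f k : X) := by
          rw [← Finset.sum_filter]
          congr 1
          ext k
          simp [Finset.mem_filter, Finset.mem_Ico, and_comm]
        have hs2 : ∑ k ∈ Finset.range n, ‖if m ≤ k then (f k : X) else 0‖ ^ 2
            = ∑ k ∈ Finset.Ico m n, ‖(f k : X)‖ ^ 2 := by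
          rw [show (fun k => ‖if m ≤ k then (f k : X) else 0‖ ^ 2)
              = fun k => if m ≤ k then ‖(f k : X)‖ ^ 2 else 0 from
            funext fun k => by split <;> simp]
          rw [← Finset.sum_filter]
          congr 1
          ext k
          simp [Finset.mem_filter, Finset.mem_Ico, and_comm]
        rw [hs1, hs2] at hpad
        calc ‖∑ k ∈ Finset.Ico m n, (f k : X)‖
            ≤ C * Real.sqrt (∑ k ∈ Finset.Ico m n, ‖(f k : X)‖ ^ 2) := hpad
          _ ≤ C * Real.sqrt (∑' j, ‖f (j + N)‖ ^ (2:ℕ)) :=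
              mul_le_mul_of_nonneg_left (Real.sqrt_le_sqrt hIco) hC.le
      · have htail0 : Tendsto (fun N => ∑' j, ‖f (j + N)‖ ^ (2:ℕ)) atTop (nhds 0) :=
          tendsto_sum_nat_add fun k => ‖f k‖ ^ (2:ℕ)
        have hcont : Tendsto (fun N => C * Real.sqrt (∑' j, ‖f (j + N)‖ ^ (2:ℕ)))
            atTop (nhds (C * Real.sqrt 0)) :=
          (Real.continuous_sqrt.tendsto 0).comp htail0 |>.const_mul C
        simpa using hcont
    obtain ⟨x, hx⟩ := cauchySeq_tendsto_of_complete hcauchy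
    have hPnx : ∀ n, P n x = (f n : X) := by
      intro n
      have h1 : Tendsto (fun N => P n (∑ k ∈ Finset.range N, (f k : X)))
          atTop (nhds (P n x)) := ((P n).continuous.tendsto x).comp hx
      have h2 : ∀ N, n < N → P n (∑ k ∈ Finset.range N, (f k : X)) = (f n : X) := by
        intro N hN
        rw [map_sum]
        rw [Finset.sum_eq_single n
          (fun k _ hk => by rw [← hfk k, horth n k (Ne.symm hk)])
          (fun h => absurd (Finset.mem_range.2 hN) h)]
        exact hfk n
      have h3 : Tendsto (fun N => P n (∑ k ∈ Finset.range N, (f k : X)))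
          atTop (nhds (f n : X)) := by
        refine Tendsto.congr' ?_ tendsto_const_nhds
        filter_upwards [eventually_gt_atTop n] with N hN
        exact (h2 N hN).symm
      exact tendsto_nhds_unique h1 h3
    refine ⟨x, ?_⟩
    apply lp.ext
    funext n
    apply Subtype.ext
    show ((Tc x) n : X) = (f n : X)
    rw [hTcapp x n, hPnx n]
  exact ⟨ContinuousLinearEquiv.ofBijective Tc hinj hsurj⟩
end

section
/- Let X be a Banach space with Schauder decomposition (F_n), let K ≥ 1, and let (δ_N) be a decreasing sequence of positive reals with ∏_{N=1}^∞ (1+δ_N) ≤ 2. Suppose ||| · ||| is an equivalent norm on X with ‖x‖ ≤ |||x||| ≤ 2‖x‖ such that for every N, every x ∈ F_1 + ... + F_N and every y ∈ closure of Σ_{k=N+2}^∞ F_k, one has |||x+y||| ≤ (1+δ_N)(|||x|||² + 4K²‖y‖²)^{1/2}. Then for every finitely nonzero block basic sequence (x_k)_{k=1}^n with respect to (F_n), ‖Σ_{k=1}^n x_k‖ ≤ 32 K² (Σ_{k=1}^n ‖x_k‖²)^{1/2}. -/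
open Filter Finset

/-- Splitting a sum over `range n` into even- and odd-indexed parts. -/
lemma sum_range_even_odd_split {M : Type*} [AddCommMonoid M] (f : ℕ → M) (n : ℕ) :
    ∑ k ∈ Finset.range n, f k =
      (∑ i ∈ Finset.range ((n + 1) / 2), f (2 * i)) +
        (∑ i ∈ Finset.range (n / 2), f (2 * i + 1)) := by
  induction n with
  | zero => simp
  | succ n ih =>
    rw [Finset.sum_range_succ, ih]
    rcases Nat.even_or_odd n with ⟨t, ht⟩ | ⟨t, ht⟩
    · have h1 : (n + 1 + 1) / 2 = t + 1 := by omega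
      have h2 : (n + 1) / 2 = t := by omega
      have h3 : n / 2 = t := by omega
      rw [h1, h2, h3, Finset.sum_range_succ (fun i => f (2 * i)) t]
      have : 2 * t = n := by omega
      rw [this]
      abel
    · have h1 : (n + 1 + 1) / 2 = t + 1 := by omega
      have h2 : (n + 1) / 2 = t + 1 := by omega
      have h3 : n / 2 = t := by omega
      rw [h1, h2, h3, Finset.sum_range_succ (fun i => f (2 * i + 1)) t]
      have : 2 * t + 1 = n := by omega
      rw [this]
      abel

/-- Let `X` be a Banach space with Schauder decomposition `(Fₙ)` (projections
`Pₙ`), `K ≥ 1`, and `(δ_N)` a decreasing sequence of positive reals with `∏ (1+δ_N) ≤ 2`.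
Suppose `|||·|||` (denoted `T`) is an equivalent norm with `‖x‖ ≤ T x ≤ 2‖x‖` such that for
every `N`, every `x ∈ F₀ + ⋯ + F_{N-1}` and every `y` in the closed span of `(F_k)_{k ≥ N+1}`,
`T(x+y) ≤ (1+δ_N)·(T(x)² + 4K²‖y‖²)^{1/2}`. Then every finitely nonzero block basic sequence
`(x_k)` with respect to `(Fₙ)` satisfies `‖Σ x_k‖ ≤ 32K²(Σ ‖x_k‖²)^{1/2}`. -/
theorem block_upper_two_estimate {X : Type*} [NormedAddCommGroup X] [NormedSpace ℝ X]
    [CompleteSpace X]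
    (P : ℕ → X →L[ℝ] X) (D : ℝ)
    (hidem : ∀ n x, P n (P n x) = P n x)
    (horth : ∀ j k, j ≠ k → ∀ x, P j (P k x) = 0)
    (hconv : ∀ x : X, Tendsto (fun N => ∑ k ∈ Finset.range N, P k x) atTop (nhds x))
    (hD : ∀ N, ‖∑ k ∈ Finset.range N, P k‖ ≤ D)
    (K : ℝ) (hK : 1 ≤ K)
    (δ : ℕ → ℝ) (hδpos : ∀ N, 0 < δ N) (hδdec : Antitone δ)
    (hδprod : ∀ n, ∏ N ∈ Finset.range n, (1 + δ N) ≤ 2)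
    (T : X → ℝ)
    (hT_add : ∀ x y, T (x + y) ≤ T x + T y)
    (hT_smul : ∀ (c : ℝ) (x : X), T (c • x) = |c| * T x)
    (hT_low : ∀ x, ‖x‖ ≤ T x) (hT_up : ∀ x, T x ≤ 2 * ‖x‖)
    (hmain : ∀ (N : ℕ) (x y : X), (∑ i ∈ Finset.range N, P i) x = x →
      (∀ i, i < N + 1 → P i y = 0) →
      T (x + y) ≤ (1 + δ N) * Real.sqrt ((T x) ^ 2 + 4 * K ^ 2 * ‖y‖ ^ 2))
    -- `(x_k)_{k<n}` is a block basic sequence with respect to the decomposition: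
    (n : ℕ) (x : ℕ → X) (r : ℕ → ℕ) (hr0 : r 0 = 0) (hrmono : StrictMono r)
    (hblock : ∀ k j, (j < r k ∨ r (k + 1) ≤ j) → P j (x k) = 0) :
    ‖∑ k ∈ Finset.range n, x k‖ ≤
      32 * K ^ 2 * Real.sqrt (∑ k ∈ Finset.range n, ‖x k‖ ^ 2) := by
  have hTnn : ∀ z : X, 0 ≤ T z := fun z => (norm_nonneg z).trans (hT_low z)
  -- partial sums fix vectors supported below `M`
  have hfix : ∀ (z : X) (M : ℕ), (∀ j, M ≤ j → P j z = 0) →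
      ∀ N, M ≤ N → (∑ i ∈ Finset.range N, P i) z = z := by
    intro z M hz N hN
    have hconst : ∀ N', M ≤ N' →
        (∑ i ∈ Finset.range N', (P i) z) = ∑ i ∈ Finset.range M, (P i) z := by
      intro N' hN'
      rw [← Finset.sum_range_add_sum_Ico _ hN']
      have : (∑ i ∈ Finset.Ico M N', (P i) z) = 0 :=
        Finset.sum_eq_zero fun i hi => hz i (Finset.mem_Ico.mp hi).1
      rw [this, add_zero]
    have hlim : Tendsto (fun N' => ∑ i ∈ Finset.range N', (P i) z) atTop (nhds z) := hconv z
    have heq : (fun N' => ∑ i ∈ Finset.range N', (P i) z)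
        =ᶠ[atTop] fun _ => ∑ i ∈ Finset.range M, (P i) z :=
      Filter.eventually_atTop.mpr ⟨M, fun N' hN' => hconst N' hN'⟩
    have hlim2 : Tendsto (fun _ : ℕ => ∑ i ∈ Finset.range M, (P i) z) atTop (nhds z) :=
      hlim.congr' heq
    have hMz : (∑ i ∈ Finset.range M, (P i) z) = z :=
      tendsto_nhds_unique tendsto_const_nhds hlim2
    have : (∑ i ∈ Finset.range N, P i) z = ∑ i ∈ Finset.range N, (P i) z := by
      simp
    rw [this, hconst N hN, hMz]
  -- Key lemma: blocks separated by gaps satisfy the upper ℓ² estimate with constant 4K.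
  have key : ∀ (y : ℕ → X) (a b : ℕ → ℕ), (∀ i, a i ≤ b i) → (∀ i, b i + 1 ≤ a (i + 1)) →
      (∀ i j, (j < a i ∨ b i ≤ j) → P j (y i) = 0) → ∀ m,
      T (∑ i ∈ Finset.range m, y i) ≤
        4 * K * Real.sqrt (∑ i ∈ Finset.range m, ‖y i‖ ^ 2) := by
    intro y a b hab hgap hsupp m
    have hbmono : StrictMono b := strictMono_nat_of_lt_succ fun i =>
      lt_of_lt_of_le (Nat.lt_succ_of_le le_rfl) ((hgap i).trans (hab (i + 1)))
    have hble : ∀ i, i ≤ b i := fun i => hbmono.le_apply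
    have hQ : ∀ m, (1 : ℝ) ≤ ∏ i ∈ Finset.range m, (1 + δ i) := by
      intro m
      induction m with
      | zero => simp
      | succ m ih =>
        rw [Finset.prod_range_succ]
        nlinarith [hδpos m]
    -- inner induction
    have inner : ∀ m, T (∑ i ∈ Finset.range (m + 1), y i) ≤
        (∏ i ∈ Finset.range m, (1 + δ i)) * (2 * K) *
          Real.sqrt (∑ i ∈ Finset.range (m + 1), ‖y i‖ ^ 2) := by
      intro m
      induction m with
      | zero =>
        simp only [zero_add, Finset.range_one, Finset.sum_singleton, Finset.range_zero,
          Finset.prod_empty, one_mul]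
        rw [Real.sqrt_sq (norm_nonneg _)]
        have := hT_up (y 0)
        nlinarith [norm_nonneg (y 0)]
      | succ m ih =>
        set Q : ℝ := ∏ i ∈ Finset.range m, (1 + δ i) with hQdef
        have hQ1 : (1 : ℝ) ≤ Q := hQ m
        set S1 : ℝ := ∑ i ∈ Finset.range (m + 1), ‖y i‖ ^ 2 with hS1
        set S2 : ℝ := ∑ i ∈ Finset.range (m + 2), ‖y i‖ ^ 2 with hS2
        have hS1nn : 0 ≤ S1 := Finset.sum_nonneg fun i _ => sq_nonneg _
        have hS2nn : 0 ≤ S2 := Finset.sum_nonneg fun i _ => sq_nonneg _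
        set w : X := ∑ i ∈ Finset.range (m + 1), y i with hw
        -- w is fixed by the partial sum up to b m
        have hwfix : (∑ i ∈ Finset.range (b m), P i) w = w := by
          rw [hw, map_sum]
          refine Finset.sum_congr rfl fun i hi => ?_
          have him : i ≤ m := Nat.lt_succ_iff.mp (Finset.mem_range.mp hi)
          exact hfix (y i) (b i) (fun j hj => hsupp i j (Or.inr hj)) (b m)
            (hbmono.monotone him)
        -- y (m+1) is supported above b m + 1
        have hysupp : ∀ i, i < b m + 1 → P i (y (m + 1)) = 0 := by
          intro i hi
          exact hsupp (m + 1) i (Or.inl (lt_of_lt_of_le hi (hgap m)))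
        have hstep := hmain (b m) w (y (m + 1)) hwfix hysupp
        have hsum : (∑ i ∈ Finset.range (m + 2), y i) = w + y (m + 1) := by
          rw [Finset.sum_range_succ]
        have h1 : T w ^ 2 ≤ Q ^ 2 * (2 * K) ^ 2 * S1 := by
          have h := ih
          have hrhs : (Q * (2 * K) * Real.sqrt S1) ^ 2 = Q ^ 2 * (2 * K) ^ 2 * S1 := by
            rw [mul_pow, mul_pow, Real.sq_sqrt hS1nn]
          nlinarith [hTnn w, Real.sqrt_nonneg S1, mul_nonneg (mul_nonneg (by linarith : (0:ℝ) ≤ Q) (by linarith : (0:ℝ) ≤ 2 * K)) (Real.sqrt_nonneg S1)]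
        have h2 : T w ^ 2 + 4 * K ^ 2 * ‖y (m + 1)‖ ^ 2 ≤ Q ^ 2 * (2 * K) ^ 2 * S2 := by
          have : S2 = S1 + ‖y (m + 1)‖ ^ 2 := by
            rw [hS2, hS1, Finset.sum_range_succ]
          rw [this]
          nlinarith [h1, sq_nonneg (‖y (m + 1)‖),
            mul_nonneg (by nlinarith : (0 : ℝ) ≤ Q ^ 2 - 1)
              (by positivity : (0 : ℝ) ≤ 4 * K ^ 2 * ‖y (m + 1)‖ ^ 2)]
        have h3 : Real.sqrt (T w ^ 2 + 4 * K ^ 2 * ‖y (m + 1)‖ ^ 2) ≤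
            Q * (2 * K) * Real.sqrt S2 := by
          have := Real.sqrt_le_sqrt h2
          have hx : (Q * (2 * K) * Real.sqrt S2) ^ 2 = Q ^ 2 * (2 * K) ^ 2 * S2 := by
            rw [mul_pow, mul_pow, Real.sq_sqrt hS2nn]
          have heq2 : Real.sqrt (Q ^ 2 * (2 * K) ^ 2 * S2) = Q * (2 * K) * Real.sqrt S2 := by
            rw [← hx]
            exact Real.sqrt_sq (mul_nonneg (mul_nonneg (by linarith) (by linarith))
              (Real.sqrt_nonneg S2))
          linarith [heq2 ▸ this]
        have hδle : δ (b m) ≤ δ m := hδdec (hble m)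
        have hprodsucc : (∏ i ∈ Finset.range (m + 1), (1 + δ i)) = Q * (1 + δ m) := by
          rw [Finset.prod_range_succ]
        rw [hsum, hprodsucc]
        calc T (w + y (m + 1)) ≤ (1 + δ (b m)) *
              Real.sqrt (T w ^ 2 + 4 * K ^ 2 * ‖y (m + 1)‖ ^ 2) := hstep
          _ ≤ (1 + δ m) * (Q * (2 * K) * Real.sqrt S2) := by
              apply mul_le_mul (by linarith) h3 (Real.sqrt_nonneg _) (by linarith [hδpos m])
          _ = Q * (1 + δ m) * (2 * K) * Real.sqrt S2 := by ring
    -- conclude for all m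
    match m with
    | 0 =>
      simp only [Finset.range_zero, Finset.sum_empty]
      have : T (0 : X) = 0 := by
        have := hT_smul 0 0
        simpa using this
      rw [this]
      positivity
    | Nat.succ m =>
      calc T (∑ i ∈ Finset.range (m + 1), y i) ≤
            (∏ i ∈ Finset.range m, (1 + δ i)) * (2 * K) *
              Real.sqrt (∑ i ∈ Finset.range (m + 1), ‖y i‖ ^ 2) := inner m
        _ ≤ 2 * (2 * K) * Real.sqrt (∑ i ∈ Finset.range (m + 1), ‖y i‖ ^ 2) := by
            have h2K : (0 : ℝ) ≤ 2 * K := by linarith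
            have hp := hδprod m
            have hs := Real.sqrt_nonneg (∑ i ∈ Finset.range (m + 1), ‖y i‖ ^ 2)
            exact mul_le_mul_of_nonneg_right
              (mul_le_mul_of_nonneg_right hp h2K) hs
        _ = 4 * K * Real.sqrt (∑ i ∈ Finset.range (m + 1), ‖y i‖ ^ 2) := by ring
  -- apply `key` to even-indexed and odd-indexed blocks
  have hEven := key (fun i => x (2 * i)) (fun i => r (2 * i)) (fun i => r (2 * i + 1))
    (fun i => (hrmono.monotone (by omega)))
    (fun i => by
      show r (2 * i + 1) + 1 ≤ r (2 * (i + 1))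
      have h2 : 2 * (i + 1) = 2 * i + 1 + 1 := by ring
      rw [h2]
      exact hrmono (Nat.lt_succ_self _))
    (fun i j hj => hblock (2 * i) j hj) ((n + 1) / 2)
  have hOdd := key (fun i => x (2 * i + 1)) (fun i => r (2 * i + 1)) (fun i => r (2 * i + 2))
    (fun i => (hrmono.monotone (by omega)))
    (fun i => by
      show r (2 * i + 2) + 1 ≤ r (2 * (i + 1) + 1)
      have h2 : 2 * (i + 1) + 1 = 2 * i + 2 + 1 := by ring
      rw [h2]
      exact hrmono (Nat.lt_succ_self _))
    (fun i j hj => by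
      apply hblock (2 * i + 1) j
      rcases hj with h | h
      · exact Or.inl h
      · refine Or.inr ?_
        have h2 : 2 * i + 1 + 1 = 2 * i + 2 := by ring
        rw [h2]
        exact h) ((n / 2))
  set A : ℝ := ∑ i ∈ Finset.range ((n + 1) / 2), ‖x (2 * i)‖ ^ 2 with hA
  set B : ℝ := ∑ i ∈ Finset.range (n / 2), ‖x (2 * i + 1)‖ ^ 2 with hB
  have hAnn : 0 ≤ A := Finset.sum_nonneg fun i _ => sq_nonneg _
  have hBnn : 0 ≤ B := Finset.sum_nonneg fun i _ => sq_nonneg _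
  have hsplitX := sum_range_even_odd_split x n
  have hsplitR : (∑ k ∈ Finset.range n, ‖x k‖ ^ 2) = A + B :=
    sum_range_even_odd_split (fun k => ‖x k‖ ^ 2) n
  have hTadd : T (∑ k ∈ Finset.range n, x k) ≤
      T (∑ i ∈ Finset.range ((n + 1) / 2), x (2 * i)) +
        T (∑ i ∈ Finset.range (n / 2), x (2 * i + 1)) := by
    rw [hsplitX]
    exact hT_add _ _
  have hsa : Real.sqrt A ≤ Real.sqrt (A + B) := Real.sqrt_le_sqrt (by linarith)
  have hsb : Real.sqrt B ≤ Real.sqrt (A + B) := Real.sqrt_le_sqrt (by linarith)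
  have hfinal : ‖∑ k ∈ Finset.range n, x k‖ ≤ 8 * K * Real.sqrt (A + B) := by
    have := hT_low (∑ k ∈ Finset.range n, x k)
    have hK0 : (0 : ℝ) ≤ K := by linarith
    nlinarith [Real.sqrt_nonneg (A + B)]
  rw [hsplitR]
  have hs0 : 0 ≤ Real.sqrt (A + B) := Real.sqrt_nonneg _
  have h32 : 8 * K ≤ 32 * K ^ 2 := by nlinarith
  have := mul_le_mul_of_nonneg_right h32 hs0
  linarith
end
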